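/- In the 1-category of finite sets, the construction sending a category A to M A = ∐_{n≥0} A^n / Σ_n applied to Fin_gr^k (sequences S_1 → ⋯ → S_k of finite sets with isomorphisms of diagrams) yields Fin_gr^{k+1}: concretely, there is an equivalence of groupoids between ∐_n (Fin_gr^k)^n / Σ_n and the groupoid Fin_gr^{k+1} of sequences S_1 → ⋯ → S_{k+1}, sending an n-tuple of sequences (S^1_•, …, S^n_•) to the sequence (∐_i S^i_1 → ⋯ → ∐_i S^i_k → {1,…,n}). -/

import Mathlib

open CategoryTheory

/-- `Fin_gr^k`, the groupoid whose objects are diagrams `S_1 → ⋯ → S_k` of finite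
sets and whose morphisms are isomorphisms of diagrams: we model a diagram as a
functor from the linear order `Fin k` to `FintypeCat`, and take the core. -/
abbrev SeqGrpd (k : ℕ) := Core (Fin k ⥤ FintypeCat)

/-- The quotient groupoid `∐_n (Fin_gr^k)^n / Σ_n`: objects are finite-set-indexed
families of objects of `Fin_gr^k` (a `T`-indexed family for `T` a finite set is the
same as an `n`-tuple up to the `Σ_n`-action, for `n = card T`), and a morphism
`(T, X) → (T', X')` is a bijection `σ : T ≃ T'` together with isomorphisms
`X t ≅ X' (σ t)` in `Fin_gr^k`. -/
def FamObj (k : ℕ) := Σ T : FintypeCat, (↥T → SeqGrpd k)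

instance (k : ℕ) : Category (FamObj k) where
  Hom A B := Σ' σ : (A.1 : Type) ≃ (B.1 : Type), ∀ t, (A.2 t ⟶ B.2 (σ t))
  id A := ⟨Equiv.refl _, fun t => 𝟙 (A.2 t)⟩
  comp f g := ⟨f.1.trans g.1, fun t => f.2 t ≫ g.2 (f.1 t)⟩
  id_comp := by
    rintro ⟨T, X⟩ ⟨T', X'⟩ ⟨σ, φ⟩
    dsimp
    congr 1
  comp_id := by
    rintro ⟨T, X⟩ ⟨T', X'⟩ ⟨σ, φ⟩
    dsimp
    congr 1
  assoc := by
    rintro A B C D ⟨σ, φ⟩ ⟨τ, ψ⟩ ⟨υ, χ⟩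
    dsimp
    congr 1

namespace Stmt13Aux

variable {k : ℕ}

def OIdx (k : ℕ) := Option (Fin k)

def oLE (a b : OIdx k) : Prop :=
  match b with
  | none => True
  | some j =>
    match a with
    | none => False
    | some i => i ≤ j

lemma oLE_refl (a : OIdx k) : oLE a a := by
  cases a with
  | none => trivial
  | some j => exact le_refl j

lemma oLE_trans : ∀ {a b c : OIdx k}, oLE a b → oLE b c → oLE a c
  | _, _, none, _, _ => trivial
  | some _, some _, some _, h1, h2 => le_trans h1 h2
  | none, some _, some _, h1, _ => h1.elim
  | some _, none, some _, _, h2 => h2.elim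
  | none, none, some _, _, h2 => h2.elim

instance : Preorder (OIdx k) where
  le := oLE
  le_refl := oLE_refl
  le_trans _ _ _ := oLE_trans

def onone : OIdx k := none
def osome (j : Fin k) : OIdx k := some j

lemma le_none (a : OIdx k) : a ≤ (onone : OIdx k) := trivial

lemma osome_le_osome {i j : Fin k} (h : i ≤ j) : (osome i : OIdx k) ≤ osome j := h

def m (j : Fin (k+1)) : OIdx k := if h : (j : ℕ) < k then osome ⟨j, h⟩ else onone

lemma m_last : m (Fin.last k) = (onone : OIdx k) := dif_neg (by simp)

lemma m_castSucc (j : Fin k) : m j.castSucc = osome j := by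
  have h : ((j.castSucc : Fin (k+1)) : ℕ) < k := by simpa using j.isLt
  simp only [m, dif_pos h]
  congr 1

lemma m_mono : Monotone (m (k := k)) := by
  intro i j h
  by_cases hj : (j : ℕ) < k
  · have hi : (i : ℕ) < k := lt_of_le_of_lt h hj
    show oLE (m i) (m j)
    simp only [m, dif_pos hi, dif_pos hj]
    exact h
  · show oLE (m i) (m j)
    simp only [m, dif_neg hj]
    exact le_none _

def m' : OIdx k → Fin (k+1)
  | none => Fin.last k
  | some j => j.castSucc

lemma m'_mono : Monotone (m' (k := k)) := by
  intro a b h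
  cases b with
  | none => exact Fin.le_last _
  | some j =>
    cases a with
    | none => exact (h : False).elim
    | some i => exact Fin.castSucc_le_castSucc_iff.mpr h

lemma m_leftinv (j : Fin (k+1)) : m' (m j) = j := by
  by_cases hj : (j : ℕ) < k
  · have e : m j = osome ⟨j, hj⟩ := dif_pos hj
    rw [e]
    exact Fin.ext rfl
  · have e : m j = onone := dif_neg hj
    rw [e]
    have h2 := j.isLt
    show Fin.last k = j
    exact Fin.ext (by simp; omega)

lemma m_rightinv (o : OIdx k) : m (m' o) = o := by
  cases o with
  | none => exact m_last
  | some j => exact m_castSucc j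

/-- Equivalence between `Fin (k+1)` and `OIdx k` as categories. -/
def eFin : Fin (k+1) ≌ OIdx k :=
  CategoryTheory.Equivalence.mk m_mono.functor m'_mono.functor
    (NatIso.ofComponents (fun j => eqToIso (m_leftinv j).symm)
      (by intros; apply Subsingleton.elim))
    (NatIso.ofComponents (fun o => eqToIso (m_rightinv o))
      (by intros; apply Subsingleton.elim))

def optObj (X : Fin k ⥤ FintypeCat.{0}) : OIdx k → FintypeCat
  | none => FintypeCat.of PUnit
  | some j => X.obj j

def optMap (X : Fin k ⥤ FintypeCat) :
    ∀ {a b : OIdx k}, a ≤ b → (↥(optObj X a) → ↥(optObj X b))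
  | _, none, _ => fun _ => PUnit.unit
  | some _, some _, h => X.map (homOfLE h)
  | none, some _, h => (h : False).elim

lemma optMap_refl (X : Fin k ⥤ FintypeCat) :
    ∀ (a : OIdx k) (h : a ≤ a) (x : ↥(optObj X a)), optMap X h x = x
  | none, _, x => rfl
  | some j, h, x => by
      show (X.map (homOfLE h)) x = x
      have e : X.map (homOfLE h) = 𝟙 (X.obj j) := X.map_id j
      rw [e]
      rfl

lemma optMap_trans (X : Fin k ⥤ FintypeCat) :
    ∀ {a b c : OIdx k} (h1 : a ≤ b) (h2 : b ≤ c) (h3 : a ≤ c) (x : ↥(optObj X a)),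
      optMap X h3 x = optMap X h2 (optMap X h1 x)
  | _, _, none, _, _, _, _ => rfl
  | some i, some j, some l, h1, h2, h3, x => by
      show (X.map (homOfLE h3)) x = (X.map (homOfLE h2)) ((X.map (homOfLE h1)) x)
      have e : X.map (homOfLE h3) = X.map (homOfLE h1) ≫ X.map (homOfLE h2) := by
        rw [← X.map_comp]
        rfl
      rw [e]
      rfl
  | none, some _, some _, h1, _, _, _ => (h1 : False).elim
  | some _, none, some _, _, h2, _, _ => (h2 : False).elim
  | none, none, some _, _, h2, _, _ => (h2 : False).elim

def optEquiv {X Y : Fin k ⥤ FintypeCat} (e : X ≅ Y) :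
    ∀ o : OIdx k, ↥(optObj X o) ≃ ↥(optObj Y o)
  | none => Equiv.refl _
  | some j => FintypeCat.equivEquivIso.symm (e.app j)

lemma optEquiv_natural {X Y : Fin k ⥤ FintypeCat} (e : X ≅ Y) :
    ∀ {a b : OIdx k} (h : a ≤ b) (x : ↥(optObj X a)),
      optEquiv e b (optMap X h x) = optMap Y h (optEquiv e a x)
  | _, none, _, _ => rfl
  | some i, some j, h, x => ConcreteCategory.congr_hom (e.hom.naturality (homOfLE h)) x
  | none, some _, h, _ => (h : False).elim

lemma optEquiv_refl (X : Fin k ⥤ FintypeCat) (o : OIdx k) (x : ↥(optObj X o)) :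
    optEquiv (Iso.refl X) o x = x := by
  cases o with
  | none => rfl
  | some j => rfl

lemma optEquiv_trans {X Y Z : Fin k ⥤ FintypeCat} (e : X ≅ Y) (f : Y ≅ Z) (o : OIdx k)
    (x : ↥(optObj X o)) :
    optEquiv (e ≪≫ f) o x = optEquiv f o (optEquiv e o x) := by
  cases o with
  | none => rfl
  | some j => rfl

def packO (A : FamObj k) : OIdx k ⥤ FintypeCat where
  obj o := FintypeCat.of (Σ t : (A.1 : Type), ↥(optObj (A.2 t).of o))
  map {a b} f := FintypeCat.homMk fun x => ⟨x.1, optMap (A.2 x.1).of (leOfHom f) x.2⟩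
  map_id o := by
    refine FintypeCat.hom_ext _ _ (fun x => ?_)
    exact congrArg (Sigma.mk x.1) (optMap_refl _ _ _ x.2)
  map_comp {a b c} f g := by
    refine FintypeCat.hom_ext _ _ (fun x => ?_)
    exact congrArg (Sigma.mk x.1) (optMap_trans _ (leOfHom f) (leOfHom g) _ x.2)

def packIso {A B : FamObj k} (f : A ⟶ B) : packO A ≅ packO B :=
  NatIso.ofComponents
    (fun o => FintypeCat.equivEquivIso (Equiv.sigmaCongr f.1 (fun t => optEquiv (f.2 t).iso o)))
    (by
      intro a b g
      refine FintypeCat.hom_ext _ _ (fun x => ?_)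
      exact congrArg (Sigma.mk (f.1 x.1)) (optEquiv_natural (f.2 x.1).iso (leOfHom g) x.2))

def FO : FamObj k ⥤ Core (OIdx k ⥤ FintypeCat) where
  obj A := ⟨packO A⟩
  map f := ⟨packIso f⟩
  map_id A := by
    apply Core.hom_ext
    apply NatTrans.ext
    funext o
    refine FintypeCat.hom_ext _ _ (fun x => ?_)
    exact congrArg (Sigma.mk x.1) (optEquiv_refl _ o x.2)
  map_comp {A B C} f g := by
    apply Core.hom_ext
    apply NatTrans.ext
    funext o
    refine FintypeCat.hom_ext _ _ (fun x => ?_)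
    exact congrArg (Sigma.mk (g.1 (f.1 x.1))) (optEquiv_trans (f.2 x.1).iso (g.2 (f.1 x.1)).iso o x.2)

variable {k : ℕ}

def σmap {A B : FamObj k} (α : packO A ≅ packO B) (t : (A.1 : Type)) : (B.1 : Type) :=
  (α.hom.app onone ⟨t, PUnit.unit⟩).1

lemma fst_app {A B : FamObj k} (α : packO A ≅ packO B) (o : OIdx k)
    (x : ↥((packO A).obj o)) : (α.hom.app o x).1 = σmap α x.1 := by
  have h : o ≤ (onone : OIdx k) := le_none o
  have e := ConcreteCategory.congr_hom (α.hom.naturality (homOfLE h)) x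
  exact (congrArg Sigma.fst e).symm

lemma app_comp_eq_id {A : FamObj k} {F G : OIdx k ⥤ FintypeCat} {η : F ⟶ G} {θ : G ⟶ F}
    (w : η ≫ θ = 𝟙 F) (o : OIdx k) (x : ↥(F.obj o)) : θ.app o (η.app o x) = x :=
  ConcreteCategory.congr_hom (NatTrans.congr_app w o) x

def σequiv {A B : FamObj k} (α : packO A ≅ packO B) : (A.1 : Type) ≃ (B.1 : Type) where
  toFun := σmap α
  invFun := σmap α.symm
  left_inv t := congrArg Sigma.fst
    (app_comp_eq_id (A := A) α.hom_inv_id onone (⟨t, PUnit.unit⟩ : ↥((packO A).obj onone)))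
  right_inv t := congrArg Sigma.fst
    (app_comp_eq_id (A := B) α.inv_hom_id onone (⟨t, PUnit.unit⟩ : ↥((packO B).obj onone)))

def getAt {B : FamObj k} {o : OIdx k} (y : ↥((packO B).obj o)) {s : (B.1 : Type)}
    (h : y.1 = s) : ↥(optObj (B.2 s).of o) :=
  cast (congrArg (fun s => ↥(optObj (B.2 s).of o)) h) y.2

lemma getAt_mk {B : FamObj k} {o : OIdx k} (s : (B.1 : Type)) (z : ↥(optObj (B.2 s).of o))
    (h : (Sigma.mk s z : ↥((packO B).obj o)).1 = s) : getAt ⟨s, z⟩ h = z :=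
  cast_eq _ z

lemma mk_getAt {B : FamObj k} {o : OIdx k} (y : ↥((packO B).obj o)) {s : (B.1 : Type)}
    (h : y.1 = s) :
    (⟨s, getAt y h⟩ : Σ t : (B.1 : Type), ↥(optObj (B.2 t).of o)) = y := by
  obtain ⟨t, z⟩ := y
  cases h
  rfl

lemma getAt_congr {B : FamObj k} {o : OIdx k} {y y' : ↥((packO B).obj o)} (e : y = y')
    {s : (B.1 : Type)} (h : y.1 = s) (h' : y'.1 = s) : getAt y h = getAt y' h' := by
  cases e
  rfl

lemma getAt_map {B : FamObj k} {a b : OIdx k} (hab : a ≤ b) (y : ↥((packO B).obj a))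
    {s : (B.1 : Type)} (h : y.1 = s)
    (h2 : ((packO B).map (homOfLE hab) y).1 = s) :
    getAt ((packO B).map (homOfLE hab) y) h2 = optMap (B.2 s).of hab (getAt y h) := by
  obtain ⟨t, z⟩ := y
  cases h
  rfl

def φequiv {A B : FamObj k} (α : packO A ≅ packO B) (t : (A.1 : Type)) (j : Fin k) :
    ↥((A.2 t).of.obj j) ≃ ↥((B.2 (σmap α t)).of.obj j) where
  toFun x := getAt (α.hom.app (osome j) ⟨t, x⟩) (fst_app α (osome j) ⟨t, x⟩)
  invFun y := getAt (α.inv.app (osome j) ⟨σmap α t, y⟩)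
    ((fst_app α.symm (osome j) ⟨σmap α t, y⟩).trans
      (congrArg Sigma.fst
        (app_comp_eq_id (A := A) α.hom_inv_id onone
          (⟨t, PUnit.unit⟩ : ↥((packO A).obj onone)))))
  left_inv x := by
    refine (getAt_congr ?_ _ rfl).trans (getAt_mk (o := osome j) t x rfl)
    rw [mk_getAt]
    exact ConcreteCategory.congr_hom (NatTrans.congr_app α.hom_inv_id (osome j)) ⟨t, x⟩
  right_inv y := by
    refine (getAt_congr ?_ _ rfl).trans (getAt_mk (o := osome j) _ y rfl)
    rw [mk_getAt]
    exact ConcreteCategory.congr_hom (NatTrans.congr_app α.inv_hom_id (osome j)) ⟨σmap α t, y⟩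

def φiso {A B : FamObj k} (α : packO A ≅ packO B) (t : (A.1 : Type)) :
    (A.2 t ⟶ B.2 (σmap α t)) :=
  ⟨NatIso.ofComponents (fun j => FintypeCat.equivEquivIso (φequiv α t j))
    (by
      intro i j g
      refine FintypeCat.hom_ext _ _ (fun x => ?_)
      show φequiv α t j ((A.2 t).of.map g x) = (B.2 (σmap α t)).of.map g (φequiv α t i x)
      exact (getAt_congr
        (ConcreteCategory.congr_hom (α.hom.naturality (homOfLE (osome_le_osome (leOfHom g)))) ⟨t, x⟩)
        (fst_app α (osome j) ⟨t, (A.2 t).of.map g x⟩) (fst_app α (osome i) ⟨t, x⟩)).trans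
        (getAt_map (osome_le_osome (leOfHom g)) (α.hom.app (osome i) ⟨t, x⟩)
          (fst_app α (osome i) ⟨t, x⟩) (fst_app α (osome i) ⟨t, x⟩)))⟩

def preim {A B : FamObj k} (α : FO.obj A ⟶ FO.obj B) : A ⟶ B :=
  ⟨σequiv α.iso, fun t => φiso α.iso t⟩

lemma famHom_ext {A B : FamObj k} {f g : A ⟶ B} (h1 : f.1 = g.1)
    (h2 : ∀ t, HEq (f.2 t) (g.2 t)) : f = g := by
  obtain ⟨σ1, φ1⟩ := f
  obtain ⟨σ2, φ2⟩ := g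
  cases h1
  exact congrArg (PSigma.mk σ1) (funext fun t => eq_of_heq (h2 t))

def ff : (FO (k := k)).FullyFaithful where
  preimage := preim
  map_preimage {A B} α := by
    apply Core.hom_ext
    apply NatTrans.ext
    funext o
    refine FintypeCat.hom_ext _ _ (fun x => ?_)
    cases o with
    | none =>
      have hfst : ((α.iso.hom.app none x).1 : (B.1 : Type)) = σmap α.iso x.1 := fst_app α.iso none x
      have : ∀ (u v : ↥((packO B).obj onone)), u.1 = v.1 → u = v := by
        intro u v huv
        obtain ⟨u1, u2⟩ := u
        obtain ⟨v1, v2⟩ := v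
        cases huv
        rfl
      exact this _ _ hfst.symm
    | some j =>
      exact mk_getAt (α.iso.hom.app (osome j) x) (fst_app α.iso (osome j) x)
  preimage_map {A B} f := by
    refine famHom_ext (Equiv.ext fun t => rfl) (fun t => heq_of_eq ?_)
    apply Core.hom_ext
    apply NatTrans.ext
    funext j
    refine FintypeCat.hom_ext _ _ (fun x => ?_)
    exact getAt_mk (f.1 t) (optEquiv (f.2 t).iso (osome j) x) rfl

noncomputable def fiberF (S : OIdx k ⥤ FintypeCat.{0}) (t : ↥(S.obj onone)) :
    Fin k ⥤ FintypeCat where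
  obj j :=
    haveI : Fintype {x : ↥(S.obj (osome j)) // S.map (homOfLE (le_none (osome j))) x = t} :=
      Fintype.ofFinite _
    FintypeCat.of {x : ↥(S.obj (osome j)) // S.map (homOfLE (le_none (osome j))) x = t}
  map {i j} g := FintypeCat.homMk fun x =>
    ⟨S.map (homOfLE (osome_le_osome (leOfHom g))) x.1,
      (ConcreteCategory.congr_hom (S.map_comp (homOfLE (osome_le_osome (leOfHom g)))
        (homOfLE (le_none (osome j)))) x.1).symm.trans x.2⟩
  map_id j := by
    refine FintypeCat.hom_ext _ _ (fun x => ?_)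
    refine Subtype.ext ?_
    have e : S.map (homOfLE (osome_le_osome (le_refl j))) = 𝟙 (S.obj (osome j)) :=
      S.map_id (osome j)
    exact ConcreteCategory.congr_hom e x.1
  map_comp {i j l} f g := by
    refine FintypeCat.hom_ext _ _ (fun x => ?_)
    refine Subtype.ext ?_
    exact ConcreteCategory.congr_hom (S.map_comp (homOfLE (osome_le_osome (leOfHom f)))
      (homOfLE (osome_le_osome (leOfHom g)))) x.1

noncomputable def unpack (S : OIdx k ⥤ FintypeCat) : FamObj k :=
  ⟨S.obj onone, fun t => ⟨fiberF S t⟩⟩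

noncomputable def unpackEquiv (S : OIdx k ⥤ FintypeCat) :
    ∀ o : OIdx k, ↥((packO (unpack S)).obj o) ≃ ↥(S.obj o)
  | none =>
    { toFun := fun x => x.1
      invFun := fun t => ⟨t, PUnit.unit⟩
      left_inv := fun x => rfl
      right_inv := fun t => rfl }
  | some j =>
    { toFun := fun x => x.2.1
      invFun := fun y => ⟨S.map (homOfLE (le_none (osome j))) y, ⟨y, rfl⟩⟩
      left_inv := fun x => by
        obtain ⟨t, y, h⟩ := x
        cases h
        rfl
      right_inv := fun y => rfl }

noncomputable def unpackIso (S : OIdx k ⥤ FintypeCat) : packO (unpack S) ≅ S :=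
  NatIso.ofComponents (fun o => FintypeCat.equivEquivIso (unpackEquiv S o)) (by
    intro a b g
    refine FintypeCat.hom_ext _ _ (fun x => ?_)
    cases b with
    | none =>
      cases a with
      | none =>
        show x.1 = S.map g x.1
        exact (ConcreteCategory.congr_hom (S.map_id onone) x.1).symm
      | some i =>
        show x.1 = S.map g x.2.1
        exact x.2.2.symm
    | some j =>
      cases a with
      | none => exact ((leOfHom g : oLE none (some j)) : False).elim
      | some i => rfl)

instance : (FO (k := k)).Full := ff.full
instance : (FO (k := k)).Faithful := ff.faithful

instance : (FO (k := k)).EssSurj where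
  mem_essImage S := ⟨unpack S.of, ⟨Core.isoMk (unpackIso S.of)⟩⟩

instance : (FO (k := k)).IsEquivalence := {}

def coreFunctor {C D : Type*} [Category C] [Category D] (F : C ⥤ D) : Core C ⥤ Core D where
  obj X := ⟨F.obj X.of⟩
  map f := ⟨F.mapIso f.iso⟩
  map_id X := by
    apply Core.hom_ext
    exact F.map_id X.of
  map_comp f g := by
    apply Core.hom_ext
    exact F.map_comp f.iso.hom g.iso.hom

def coreEquiv {C D : Type*} [Category C] [Category D] (e : C ≌ D) : Core C ≌ Core D :=
  CategoryTheory.Equivalence.mk (coreFunctor e.functor) (coreFunctor e.inverse)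
    (NatIso.ofComponents
      (fun X => Core.isoMk (e.unitIso.app X.of))
      (by intro X Y f; apply Core.hom_ext; exact e.unitIso.hom.naturality f.iso.hom))
    (NatIso.ofComponents
      (fun X => Core.isoMk (e.counitIso.app X.of))
      (by intro X Y f; apply Core.hom_ext; exact e.counitIso.hom.naturality f.iso.hom))

def gE : (OIdx k ⥤ FintypeCat.{0}) ≌ (Fin (k+1) ⥤ FintypeCat.{0}) :=
  (Equivalence.congrLeft eFin).symm

noncomputable def Efinal : FamObj k ≌ SeqGrpd (k+1) :=
  (FO (k := k)).asEquivalence.trans (coreEquiv gE)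

end Stmt13Aux

/-- The construction `M A = ∐_{n≥0} A^n / Σ_n` applied to `Fin_gr^k`
yields `Fin_gr^{k+1}`: there is an equivalence of groupoids between
`∐_n (Fin_gr^k)^n / Σ_n` (modelled by `FamObj k`) and the groupoid `Fin_gr^{k+1}` of
sequences `S_1 → ⋯ → S_{k+1}`, sending a tuple of sequences `(S^1_•, …, S^n_•)` to
the sequence `(∐_i S^i_1 → ⋯ → ∐_i S^i_k → {1,…,n})`: the last entry of the image
sequence is the indexing set, and the `j`-th entry is the disjoint union
`Σ t, (X t)_j` of the `j`-th entries of the family. -/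
theorem stmt13 (k : ℕ) :
    ∃ E : FamObj k ≌ SeqGrpd (k + 1),
      ∀ A : FamObj k,
        Nonempty
          ((((Core.inclusion (Fin (k+1) ⥤ FintypeCat)).obj (E.functor.obj A)).obj
              (Fin.last k) : Type) ≃ (A.1 : Type)) ∧
        ∀ j : Fin k,
          Nonempty
            ((((Core.inclusion (Fin (k+1) ⥤ FintypeCat)).obj (E.functor.obj A)).obj
                j.castSucc : Type) ≃ Σ t : (A.1 : Type), ((A.2 t).of.obj j : Type)) := by
  refine ⟨Stmt13Aux.Efinal, fun A => ⟨⟨?_⟩, fun j => ⟨?_⟩⟩⟩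
  · exact (Equiv.sigmaCongrRight (fun t => Equiv.cast
      (show ↥(Stmt13Aux.optObj (A.2 t).of (Stmt13Aux.m (Fin.last k))) = PUnit by
        rw [Stmt13Aux.m_last]; rfl))).trans (Equiv.sigmaPUnit _)
  · exact Equiv.sigmaCongrRight (fun t => Equiv.cast
      (show ↥(Stmt13Aux.optObj (A.2 t).of (Stmt13Aux.m j.castSucc)) = ((A.2 t).of.obj j : Type) by
        rw [Stmt13Aux.m_castSucc]; rfl))
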